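/- Let μ be a Borel probability measure on ℝ supported on [0,1] with a density f_μ (with respect to Lebesgue measure) satisfying f_μ(ℓ) ≥ ε for all ℓ ∈ [0,1], where ε > 0. Let ν₁, ν₂ be Borel probability measures on ℝ with finite second moments, and for i = 1,2 define Φ_{ν_i}(x) := ∫₀^x F_{ν_i}^{−1}(F_μ(ℓ)) dℓ for x ∈ [0,1]. Then sup_{x ∈ [0,1]} |Φ_{ν₁}(x) − Φ_{ν₂}(x)| ≤ (1/ε)·( ∫₀¹ (F_{ν₁}^{−1}(u) − F_{ν₂}^{−1}(u))² du )^{1/2}. -/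

import Mathlib

open MeasureTheory

/-- The cumulative distribution function of a Borel measure on `ℝ`. -/
noncomputable def cdfFun (ν : Measure ℝ) (x : ℝ) : ℝ := (ν (Set.Iic x)).toReal

/-- The right-continuous quantile function `F_ν^{-1}(y) = inf {x : F_ν(x) > y}`. -/
noncomputable def quantFun (ν : Measure ℝ) (y : ℝ) : ℝ := sInf {x : ℝ | y < cdfFun ν x}


open Set ProbabilityTheory Filter
open scoped Topology ENNReal

variable (ν : Measure ℝ) [IsProbabilityMeasure ν]

set_option linter.unusedSectionVars false

lemma cdfFun_eq_cdf (ν : Measure ℝ) [IsProbabilityMeasure ν] : cdfFun ν = ⇑(cdf ν) :=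
  funext fun x => (cdf_eq_real ν x).symm

variable (ν : Measure ℝ) [IsProbabilityMeasure ν]

lemma cdfFun_nonneg (x : ℝ) : 0 ≤ cdfFun ν x := ENNReal.toReal_nonneg

lemma cdfFun_le_one (x : ℝ) : cdfFun ν x ≤ 1 := by
  rw [cdfFun_eq_cdf]; exact cdf_le_one ν x

lemma quant_nonempty {u : ℝ} (hu : u < 1) : {x : ℝ | u < cdfFun ν x}.Nonempty := by
  simp only [cdfFun_eq_cdf]
  exact ((tendsto_cdf_atTop ν).eventually (eventually_gt_nhds hu)).exists

lemma quant_bddBelow {u : ℝ} (hu : 0 < u) : BddBelow {x : ℝ | u < cdfFun ν x} := by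
  obtain ⟨x₀, hx₀⟩ := eventually_atBot.mp
    ((tendsto_cdf_atBot ν).eventually (eventually_lt_nhds hu))
  refine ⟨x₀, fun y hy => ?_⟩
  by_contra h
  push_neg at h
  rw [mem_setOf_eq, cdfFun_eq_cdf] at hy
  exact absurd hy (not_lt.2 (hx₀ y h.le).le)

lemma quant_le_of_lt {u x : ℝ} (hu : 0 < u) (h : u < cdfFun ν x) : quantFun ν u ≤ x :=
  csInf_le (quant_bddBelow ν hu) h

lemma le_cdf_of_quant_le {u x : ℝ} (hu : 0 < u) (hu1 : u < 1) (h : quantFun ν u ≤ x) :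
    u ≤ cdfFun ν x := by
  have key : ∀ y, x < y → u ≤ cdfFun ν y := by
    intro y hy
    have h1 : sInf {z : ℝ | u < cdfFun ν z} < y := lt_of_le_of_lt h hy
    obtain ⟨z, hz, hzy⟩ :=
      (csInf_lt_iff (quant_bddBelow ν hu) (quant_nonempty ν hu1)).mp h1
    refine le_trans (le_of_lt hz) ?_
    rw [cdfFun_eq_cdf]
    rw [mem_setOf_eq, cdfFun_eq_cdf] at hz
    exact monotone_cdf ν hzy.le
  rw [cdfFun_eq_cdf]
  have hc : Tendsto (cdf ν) (𝓝[>] x) (𝓝 (cdf ν x)) :=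
    ((cdf ν).right_continuous x).mono Ioi_subset_Ici_self
  refine ge_of_tendsto hc ?_
  filter_upwards [eventually_mem_nhdsWithin] with y hy
  have := key y hy
  rwa [cdfFun_eq_cdf] at this

lemma quant_preimage (x : ℝ) :
    MeasurableSet (Ioo 0 1 ∩ quantFun ν ⁻¹' Iic x) ∧
      volume (Ioo 0 1 ∩ quantFun ν ⁻¹' Iic x) = ENNReal.ofReal (cdfFun ν x) := by
  set c := cdfFun ν x with hc
  have hc0 : 0 ≤ c := cdfFun_nonneg ν x
  have hc1 : c ≤ 1 := cdfFun_le_one ν x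
  have hsub1 : Ioo 0 c ⊆ Ioo 0 1 ∩ quantFun ν ⁻¹' Iic x := fun u hu =>
    ⟨⟨hu.1, lt_of_lt_of_le hu.2 hc1⟩, quant_le_of_lt ν hu.1 hu.2⟩
  have hsub2 : Ioo 0 1 ∩ quantFun ν ⁻¹' Iic x ⊆ Ioo 0 c ∪ {c} := by
    rintro u ⟨hu, hq⟩
    have hle : u ≤ c := le_cdf_of_quant_le ν hu.1 hu.2 hq
    rcases lt_or_eq_of_le hle with h | h
    · exact Or.inl ⟨hu.1, h⟩
    · exact Or.inr h
  have hAeq : Ioo 0 1 ∩ quantFun ν ⁻¹' Iic x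
      = Ioo 0 c ∪ ((Ioo 0 1 ∩ quantFun ν ⁻¹' Iic x) ∩ {c}) := by
    apply Subset.antisymm
    · intro u hu
      rcases hsub2 hu with h | h
      · exact Or.inl h
      · exact Or.inr ⟨hu, h⟩
    · rintro u (h | h)
      · exact hsub1 h
      · exact h.1
  constructor
  · rw [hAeq]
    exact measurableSet_Ioo.union
      (((countable_singleton c).mono inter_subset_right).measurableSet)
  · apply le_antisymm
    · rw [hAeq]
      refine le_trans (measure_union_le _ _) ?_
      have h1 : volume ((Ioo 0 1 ∩ quantFun ν ⁻¹' Iic x) ∩ {c}) = 0 :=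
        measure_mono_null inter_subset_right (Real.volume_singleton)
      rw [h1, add_zero, Real.volume_Ioo, sub_zero]
    · refine le_trans (le_of_eq ?_) (measure_mono hsub1)
      rw [Real.volume_Ioo, sub_zero]

lemma quant_aemeasurable : AEMeasurable (quantFun ν) (volume.restrict (Ioo 0 1)) := by
  classical
  set Qt : ℝ → ℝ := fun u => if u ∈ Ioo (0:ℝ) 1 then quantFun ν u else 0 with hQt
  have hQtm : Measurable Qt := by
    apply measurable_of_Iic
    intro x
    have heq : Qt ⁻¹' Iic x =
        (Ioo 0 1 ∩ quantFun ν ⁻¹' Iic x) ∪ (if (0:ℝ) ≤ x then (Ioo (0:ℝ) 1)ᶜ else ∅) := by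
      ext u
      simp only [mem_preimage, mem_Iic, Qt, mem_union, mem_inter_iff, mem_compl_iff]
      by_cases hu : u ∈ Ioo (0:ℝ) 1
      · rw [if_pos hu]
        by_cases hx : (0:ℝ) ≤ x <;> simp [hu, hx]
      · rw [if_neg hu]
        by_cases hx : (0:ℝ) ≤ x <;> simp [hu, hx]
    rw [heq]
    refine ((quant_preimage ν x).1).union ?_
    split_ifs
    · exact measurableSet_Ioo.compl
    · exact MeasurableSet.empty
  refine ⟨Qt, hQtm, ?_⟩
  refine (ae_restrict_iff' measurableSet_Ioo).mpr (ae_of_all _ fun u hu => ?_)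
  exact (if_pos hu).symm

lemma quant_map : (volume.restrict (Ioo 0 1)).map (quantFun ν) = ν := by
  have hae := quant_aemeasurable ν
  haveI hprob : IsProbabilityMeasure ((volume.restrict (Ioo (0:ℝ) 1)).map (quantFun ν)) := by
    constructor
    rw [Measure.map_apply₀ hae MeasurableSet.univ.nullMeasurableSet]
    simp [Real.volume_Ioo]
  refine Measure.ext_of_Iic _ _ fun x => ?_
  rw [Measure.map_apply₀ hae measurableSet_Iic.nullMeasurableSet,
    Measure.restrict_apply' measurableSet_Ioo, inter_comm,
    (quant_preimage ν x).2]
  exact ENNReal.ofReal_toReal (measure_ne_top ν _)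

lemma continuous_cdfFun {μ : Measure ℝ} [IsProbabilityMeasure μ] (h : ∀ x : ℝ, μ {x} = 0) :
    Continuous (cdfFun μ) := by
  rw [cdfFun_eq_cdf, continuous_iff_continuousAt]
  intro x
  rw [(monotone_cdf μ).continuousAt_iff_leftLim_eq_rightLim, (cdf μ).rightLim_eq]
  have h1 : (cdf μ).measure {x} = 0 := by rw [measure_cdf]; exact h x
  rw [StieltjesFunction.measure_singleton] at h1
  have h2 : cdf μ x - Function.leftLim (cdf μ) x ≤ 0 := ENNReal.ofReal_eq_zero.mp h1
  have h3 : Function.leftLim (⇑(cdf μ)) x ≤ cdf μ x := (monotone_cdf μ).leftLim_le le_rfl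
  linarith

/-- With `Φ_ν(x) = ∫₀ˣ F_ν^{-1}(F_μ(ℓ)) dℓ`, for probability measures
`ν₁, ν₂` with finite second moments,
`sup_{x∈[0,1]} |Φ_{ν₁}(x) − Φ_{ν₂}(x)| ≤ (1/ε)·(∫₀¹ (F_{ν₁}^{-1}(u) − F_{ν₂}^{-1}(u))² du)^{1/2}`,
where `ε > 0` is a lower bound for the density of `μ` on `[0,1]`. -/
theorem stmt10 (ε : ℝ) (hε : 0 < ε) (fμ : ℝ → ℝ)
    (μ : Measure ℝ) [IsProbabilityMeasure μ]
    (hμ : μ = volume.withDensity fun x => ENNReal.ofReal (fμ x))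
    (hsupp : ∀ x : ℝ, x ∉ Set.Icc (0 : ℝ) 1 → fμ x = 0)
    (hfε : ∀ x ∈ Set.Icc (0 : ℝ) 1, ε ≤ fμ x)
    (ν₁ ν₂ : Measure ℝ) [IsProbabilityMeasure ν₁] [IsProbabilityMeasure ν₂]
    (h₁ : Integrable (fun x : ℝ => x ^ 2) ν₁) (h₂ : Integrable (fun x : ℝ => x ^ 2) ν₂)
    (Φ : Measure ℝ → ℝ → ℝ)
    (hΦ : ∀ ν x, Φ ν x = ∫ t in (0 : ℝ)..x, quantFun ν (cdfFun μ t)) :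
    ∀ x ∈ Set.Icc (0 : ℝ) 1,
      |Φ ν₁ x - Φ ν₂ x| ≤
        (1 / ε) * Real.sqrt (∫ u in (0 : ℝ)..1, (quantFun ν₁ u - quantFun ν₂ u) ^ 2) := by
  intro x hx
  have hb0 : ENNReal.ofReal ε ≠ 0 := by
    simp only [ne_eq, ENNReal.ofReal_eq_zero, not_le]; exact hε
  have hμvol : μ ≪ volume := by rw [hμ]; exact withDensity_absolutelyContinuous volume _
  have hatom : ∀ y : ℝ, μ {y} = 0 := fun y => hμvol Real.volume_singleton
  have hFmono : Monotone (cdfFun μ) := by rw [cdfFun_eq_cdf]; exact monotone_cdf μ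
  have hFmeas : Measurable (cdfFun μ) := hFmono.measurable
  have hFcont : Continuous (cdfFun μ) := continuous_cdfFun hatom
  have hIio0 : μ (Iio 0) = 0 := by
    rw [hμ, withDensity_apply _ measurableSet_Iio]
    refine le_antisymm ?_ zero_le
    have hb : ∀ᵐ y ∂(volume.restrict (Iio (0:ℝ))), ENNReal.ofReal (fμ y) ≤ (0:ℝ≥0∞) :=
      (ae_restrict_iff' measurableSet_Iio).mpr (ae_of_all _ fun y hy => by
        rw [hsupp y (by intro hmem; exact absurd hmem.1 (not_le.mpr hy))]; simp)
    calc ∫⁻ y in Iio (0:ℝ), ENNReal.ofReal (fμ y) ≤ ∫⁻ _ in Iio (0:ℝ), (0:ℝ≥0∞) :=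
          lintegral_mono_ae hb
      _ = 0 := by simp
  have hIoi1 : μ (Ioi 1) = 0 := by
    rw [hμ, withDensity_apply _ measurableSet_Ioi]
    refine le_antisymm ?_ zero_le
    have hb : ∀ᵐ y ∂(volume.restrict (Ioi (1:ℝ))), ENNReal.ofReal (fμ y) ≤ (0:ℝ≥0∞) :=
      (ae_restrict_iff' measurableSet_Ioi).mpr (ae_of_all _ fun y hy => by
        rw [hsupp y (by intro hmem; exact absurd hmem.2 (not_le.mpr hy))]; simp)
    calc ∫⁻ y in Ioi (1:ℝ), ENNReal.ofReal (fμ y) ≤ ∫⁻ _ in Ioi (1:ℝ), (0:ℝ≥0∞) :=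
          lintegral_mono_ae hb
      _ = 0 := by simp
  have hF0 : cdfFun μ 0 = 0 := by
    have h1 : μ (Iic 0) = 0 := by
      refine le_antisymm ?_ zero_le
      rw [← Iio_union_right (a := (0:ℝ))]
      refine le_trans (measure_union_le _ _) ?_
      rw [hIio0, hatom 0, add_zero]
    simp [cdfFun, h1]
  have hF1 : cdfFun μ 1 = 1 := by
    have h1 : μ (Iic 1) = 1 := by
      have h2 := measure_add_measure_compl (μ := μ) (measurableSet_Iic (a := (1:ℝ)))
      rw [compl_Iic, hIoi1, add_zero, measure_univ] at h2
      exact h2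
    simp [cdfFun, h1]
  have hFstrict : StrictMonoOn (cdfFun μ) (Icc 0 1) := by
    intro s hs t ht hst
    have hIoc : ENNReal.ofReal ε * ENNReal.ofReal (t - s) ≤ μ (Ioc s t) := by
      rw [hμ, withDensity_apply _ measurableSet_Ioc]
      have hb : ∀ᵐ y ∂(volume.restrict (Ioc s t)), ENNReal.ofReal ε ≤ ENNReal.ofReal (fμ y) :=
        (ae_restrict_iff' measurableSet_Ioc).mpr (ae_of_all _ fun y hy =>
          ENNReal.ofReal_le_ofReal (hfε y ⟨le_trans hs.1 hy.1.le, le_trans hy.2 ht.2⟩))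
      calc ENNReal.ofReal ε * ENNReal.ofReal (t - s)
          = ∫⁻ _ in Ioc s t, ENNReal.ofReal ε := by
            rw [setLIntegral_const, Real.volume_Ioc]
        _ ≤ _ := lintegral_mono_ae hb
    have hpos : 0 < μ (Ioc s t) := by
      refine lt_of_lt_of_le ?_ hIoc
      refine ENNReal.mul_pos hb0 ?_
      simp only [ne_eq, ENNReal.ofReal_eq_zero, not_le, sub_pos]
      exact hst
    have hsplit : μ (Iic t) = μ (Iic s) + μ (Ioc s t) := by
      rw [← Iic_union_Ioc_eq_Iic hst.le]
      exact measure_union (Iic_disjoint_Ioc le_rfl) measurableSet_Ioc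
    show cdfFun μ s < cdfFun μ t
    simp only [cdfFun]
    rw [hsplit, ENNReal.toReal_add (measure_ne_top μ _) (measure_ne_top μ _)]
    have := ENNReal.toReal_pos hpos.ne' (measure_ne_top μ _)
    linarith
  haveI hPprob : IsProbabilityMeasure (volume.restrict (Ioo (0:ℝ) 1)) :=
    ⟨by simp [Real.volume_Ioo]⟩
  haveI := Measure.isProbabilityMeasure_map (μ := μ) hFmeas.aemeasurable
  have hmapF : μ.map (cdfFun μ) = volume.restrict (Ioo 0 1) := by
    refine Measure.ext_of_Iic _ _ fun z => ?_
    rw [Measure.map_apply hFmeas measurableSet_Iic,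
      Measure.restrict_apply' measurableSet_Ioo]
    rcases lt_or_ge z 0 with hz | hz
    · have h1 : cdfFun μ ⁻¹' Iic z = ∅ := by
        ext ℓ
        simp only [mem_preimage, mem_Iic, mem_empty_iff_false, iff_false, not_le]
        exact lt_of_lt_of_le hz ENNReal.toReal_nonneg
      have h2 : Iic z ∩ Ioo (0:ℝ) 1 = ∅ := by
        ext u
        simp only [mem_inter_iff, mem_Iic, mem_Ioo, mem_empty_iff_false, iff_false, not_and]
        intro h1' h2'
        linarith
      rw [h1, h2]
      simp
    rcases lt_or_ge z 1 with hz1 | hz1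
    · obtain ⟨a, ha, hFa⟩ : ∃ a ∈ Icc (0:ℝ) 1, cdfFun μ a = z := by
        have h := intermediate_value_Icc (by norm_num : (0:ℝ) ≤ 1) hFcont.continuousOn
        have hz' : z ∈ Icc (cdfFun μ 0) (cdfFun μ 1) := by rw [hF0, hF1]; exact ⟨hz, hz1.le⟩
        exact h hz'
      have hsub : cdfFun μ ⁻¹' Iic z ⊆ Iic a ∪ Ioi 1 := by
        intro ℓ hℓ
        simp only [mem_preimage, mem_Iic] at hℓ
        by_contra hcon
        simp only [mem_union, mem_Iic, mem_Ioi, not_or, not_le, not_lt] at hcon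
        obtain ⟨hal, hl1⟩ := hcon
        have hlt : cdfFun μ a < cdfFun μ ℓ := hFstrict ha ⟨le_trans ha.1 hal.le, hl1⟩ hal
        rw [hFa] at hlt
        linarith
      have hsup : Iic a ⊆ cdfFun μ ⁻¹' Iic z := by
        intro ℓ hℓ
        simp only [mem_preimage, mem_Iic]
        rw [← hFa]
        exact hFmono hℓ
      have h1 : μ (cdfFun μ ⁻¹' Iic z) = μ (Iic a) := by
        refine le_antisymm ?_ (measure_mono hsup)
        refine le_trans (measure_mono hsub) ?_
        refine le_trans (measure_union_le _ _) ?_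
        rw [hIoi1, add_zero]
      have h2 : μ (Iic a) = ENNReal.ofReal z := by
        rw [← hFa]
        exact (ENNReal.ofReal_toReal (measure_ne_top μ _)).symm
      have h3 : Iic z ∩ Ioo (0:ℝ) 1 = Ioc 0 z := by
        ext u
        simp only [mem_inter_iff, mem_Iic, mem_Ioo, mem_Ioc]
        constructor
        · rintro ⟨h1', h2', _⟩; exact ⟨h2', h1'⟩
        · rintro ⟨h1', h2'⟩; exact ⟨h2', h1', lt_of_le_of_lt h2' hz1⟩
      rw [h1, h2, h3, Real.volume_Ioc, sub_zero]
    · have h1 : cdfFun μ ⁻¹' Iic z = univ := by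
        refine eq_univ_of_forall fun ℓ => ?_
        simp only [mem_preimage, mem_Iic]
        exact le_trans (cdfFun_le_one μ ℓ) hz1
      have h2 : Iic z ∩ Ioo (0:ℝ) 1 = Ioo 0 1 :=
        inter_eq_right.mpr fun u hu => le_trans hu.2.le hz1
      rw [h1, h2, measure_univ, Real.volume_Ioo]
      norm_num
  -- measure comparison
  have hleε : ENNReal.ofReal ε • volume.restrict (Icc (0:ℝ) 1) ≤ μ := by
    rw [Measure.le_iff]
    intro s hs
    rw [Measure.smul_apply, Measure.restrict_apply hs, smul_eq_mul]
    calc ENNReal.ofReal ε * volume (s ∩ Icc 0 1)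
        = ∫⁻ _ in s ∩ Icc (0:ℝ) 1, ENNReal.ofReal ε := by rw [setLIntegral_const]
      _ ≤ ∫⁻ y in s ∩ Icc (0:ℝ) 1, ENNReal.ofReal (fμ y) :=
          lintegral_mono_ae ((ae_restrict_iff' (hs.inter measurableSet_Icc)).mpr
            (ae_of_all _ fun y hy => ENNReal.ofReal_le_ofReal (hfε y hy.2)))
      _ = μ (s ∩ Icc 0 1) := by rw [hμ, withDensity_apply _ (hs.inter measurableSet_Icc)]
      _ ≤ μ s := measure_mono inter_subset_left
  have hle' : volume.restrict (Icc (0:ℝ) 1) ≤ (ENNReal.ofReal ε)⁻¹ • μ := by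
    rw [Measure.le_iff]
    intro s hs
    rw [Measure.smul_apply, smul_eq_mul, ← ENNReal.div_eq_inv_mul,
      ENNReal.le_div_iff_mul_le (Or.inl hb0) (Or.inl ENNReal.ofReal_ne_top), mul_comm]
    have h := Measure.le_iff.mp hleε s hs
    rw [Measure.smul_apply, smul_eq_mul] at h
    exact h
  -- quantile integrability
  set P : Measure ℝ := volume.restrict (Ioo (0:ℝ) 1) with hP
  have hQae1 : AEMeasurable (quantFun ν₁) P := quant_aemeasurable ν₁
  have hQae2 : AEMeasurable (quantFun ν₂) P := quant_aemeasurable ν₂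
  have hmap1 : P.map (quantFun ν₁) = ν₁ := quant_map ν₁
  have hmap2 : P.map (quantFun ν₂) = ν₂ := quant_map ν₂
  have hQ1sq : Integrable (fun u => quantFun ν₁ u ^ 2) P := by
    have hg : AEStronglyMeasurable (fun y : ℝ => y ^ 2) (P.map (quantFun ν₁)) := by
      rw [hmap1]; exact h₁.1
    exact (integrable_map_measure hg hQae1).mp (by rw [hmap1]; exact h₁)
  have hQ2sq : Integrable (fun u => quantFun ν₂ u ^ 2) P := by
    have hg : AEStronglyMeasurable (fun y : ℝ => y ^ 2) (P.map (quantFun ν₂)) := by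
      rw [hmap2]; exact h₂.1
    exact (integrable_map_measure hg hQae2).mp (by rw [hmap2]; exact h₂)
  have habs_le : ∀ t : ℝ, |t| ≤ t ^ 2 + 1 := by
    intro t
    nlinarith [sq_nonneg (|t| - 1), sq_abs t, abs_nonneg t]
  have hQ1L1 : Integrable (quantFun ν₁) P := by
    refine Integrable.mono (hQ1sq.add (integrable_const 1)) hQae1.aestronglyMeasurable ?_
    refine ae_of_all _ fun u => ?_
    rw [Real.norm_eq_abs, Real.norm_eq_abs]
    exact le_trans (habs_le _) (le_abs_self _)
  have hQ2L1 : Integrable (quantFun ν₂) P := by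
    refine Integrable.mono (hQ2sq.add (integrable_const 1)) hQae2.aestronglyMeasurable ?_
    refine ae_of_all _ fun u => ?_
    rw [Real.norm_eq_abs, Real.norm_eq_abs]
    exact le_trans (habs_le _) (le_abs_self _)
  have hgae : AEMeasurable (fun u => quantFun ν₁ u - quantFun ν₂ u) P := hQae1.sub hQae2
  have hg2 : Integrable (fun u => (quantFun ν₁ u - quantFun ν₂ u) ^ 2) P := by
    refine Integrable.mono ((hQ1sq.const_mul 2).add (hQ2sq.const_mul 2))
      ((hgae.pow_const 2).aestronglyMeasurable) ?_
    refine ae_of_all _ fun u => ?_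
    have h1 : (quantFun ν₁ u - quantFun ν₂ u) ^ 2 ≤
        2 * quantFun ν₁ u ^ 2 + 2 * quantFun ν₂ u ^ 2 := by
      nlinarith [sq_nonneg (quantFun ν₁ u + quantFun ν₂ u)]
    have h2 : (0:ℝ) ≤ 2 * quantFun ν₁ u ^ 2 + 2 * quantFun ν₂ u ^ 2 := by positivity
    simpa [Pi.add_apply, Real.norm_eq_abs, abs_of_nonneg (sq_nonneg
      (quantFun ν₁ u - quantFun ν₂ u)), abs_of_nonneg h2] using h1
  have hgP : Integrable (fun u => quantFun ν₁ u - quantFun ν₂ u) P := hQ1L1.sub hQ2L1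
  -- transfer to μ side
  have hQF1μ : Integrable (fun t => quantFun ν₁ (cdfFun μ t)) μ := by
    have hg : AEStronglyMeasurable (quantFun ν₁) (μ.map (cdfFun μ)) := by
      rw [hmapF]; exact hQae1.aestronglyMeasurable
    exact (integrable_map_measure hg hFmeas.aemeasurable).mp (by rw [hmapF]; exact hQ1L1)
  have hQF2μ : Integrable (fun t => quantFun ν₂ (cdfFun μ t)) μ := by
    have hg : AEStronglyMeasurable (quantFun ν₂) (μ.map (cdfFun μ)) := by
      rw [hmapF]; exact hQae2.aestronglyMeasurable
    exact (integrable_map_measure hg hFmeas.aemeasurable).mp (by rw [hmapF]; exact hQ2L1)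
  have hgFμ : Integrable (fun t => quantFun ν₁ (cdfFun μ t) - quantFun ν₂ (cdfFun μ t)) μ :=
    hQF1μ.sub hQF2μ
  have hεinvtop : (ENNReal.ofReal ε)⁻¹ ≠ ∞ := ENNReal.inv_ne_top.mpr hb0
  have hQF1I : IntegrableOn (fun t => quantFun ν₁ (cdfFun μ t)) (Icc (0:ℝ) 1) volume :=
    (hQF1μ.smul_measure hεinvtop).mono_measure hle'
  have hQF2I : IntegrableOn (fun t => quantFun ν₂ (cdfFun μ t)) (Icc (0:ℝ) 1) volume :=
    (hQF2μ.smul_measure hεinvtop).mono_measure hle'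
  have hgFI : IntegrableOn
      (fun t => quantFun ν₁ (cdfFun μ t) - quantFun ν₂ (cdfFun μ t)) (Icc (0:ℝ) 1) volume :=
    hQF1I.sub hQF2I
  have hgFIabs : IntegrableOn
      (fun t => |quantFun ν₁ (cdfFun μ t) - quantFun ν₂ (cdfFun μ t)|) (Icc (0:ℝ) 1) volume :=
    hgFI.abs
  have hgabs_asm : AEStronglyMeasurable (fun u => |quantFun ν₁ u - quantFun ν₂ u|) P := by
    simpa [Real.norm_eq_abs] using hgae.aestronglyMeasurable.norm
  have hII1 : IntervalIntegrable (fun t => quantFun ν₁ (cdfFun μ t)) volume 0 x := by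
    rw [intervalIntegrable_iff_integrableOn_Ioc_of_le hx.1]
    exact hQF1I.mono_set (subset_trans Ioc_subset_Icc_self (Icc_subset_Icc le_rfl hx.2))
  have hII2 : IntervalIntegrable (fun t => quantFun ν₂ (cdfFun μ t)) volume 0 x := by
    rw [intervalIntegrable_iff_integrableOn_Ioc_of_le hx.1]
    exact hQF2I.mono_set (subset_trans Ioc_subset_Icc_self (Icc_subset_Icc le_rfl hx.2))
  have hIIabs : IntervalIntegrable
      (fun t => |quantFun ν₁ (cdfFun μ t) - quantFun ν₂ (cdfFun μ t)|) volume 0 1 := by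
    rw [intervalIntegrable_iff_integrableOn_Ioc_of_le zero_le_one]
    exact hgFIabs.mono_set Ioc_subset_Icc_self
  -- Cauchy-Schwarz
  have hCS : ∫ u, |quantFun ν₁ u - quantFun ν₂ u| ∂P ≤
      Real.sqrt (∫ u, (quantFun ν₁ u - quantFun ν₂ u) ^ 2 ∂P) := by
    set X : ℝ → ℝ := fun u => |quantFun ν₁ u - quantFun ν₂ u| with hX
    have hXasm : AEStronglyMeasurable X P := hgabs_asm
    have hXsq : Integrable (fun u => X u ^ 2) P := by
      refine hg2.congr (ae_of_all _ fun u => ?_)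
      show (quantFun ν₁ u - quantFun ν₂ u) ^ 2 = |quantFun ν₁ u - quantFun ν₂ u| ^ 2
      exact (sq_abs _).symm
    have hXmem : MemLp X 2 P := (memLp_two_iff_integrable_sq hXasm).mpr hXsq
    have hvar := variance_nonneg X P
    rw [variance_eq_sub hXmem] at hvar
    have hsq : (∫ u, X u ∂P) ^ 2 ≤ ∫ u, (quantFun ν₁ u - quantFun ν₂ u) ^ 2 ∂P := by
      have hEq : P[X ^ 2] = ∫ u, (quantFun ν₁ u - quantFun ν₂ u) ^ 2 ∂P := by
        refine integral_congr_ae (ae_of_all _ fun u => ?_)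
        simp [hX, sq_abs]
      rw [hEq] at hvar
      linarith
    calc ∫ u, X u ∂P = Real.sqrt ((∫ u, X u ∂P) ^ 2) :=
          (Real.sqrt_sq (integral_nonneg fun u => abs_nonneg _)).symm
      _ ≤ _ := Real.sqrt_le_sqrt hsq
  -- main chain
  rw [hΦ, hΦ, ← intervalIntegral.integral_sub hII1 hII2]
  have step1 : |∫ t in (0:ℝ)..x, (quantFun ν₁ (cdfFun μ t) - quantFun ν₂ (cdfFun μ t))| ≤
      ∫ t in (0:ℝ)..1, |quantFun ν₁ (cdfFun μ t) - quantFun ν₂ (cdfFun μ t)| := by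
    refine le_trans (intervalIntegral.abs_integral_le_integral_abs hx.1) ?_
    refine intervalIntegral.integral_mono_interval le_rfl hx.1 hx.2
      (ae_of_all _ fun t => abs_nonneg _) hIIabs
  refine le_trans step1 ?_
  have step2 : ∫ t in (0:ℝ)..1, |quantFun ν₁ (cdfFun μ t) - quantFun ν₂ (cdfFun μ t)| ≤
      (1 / ε) * ∫ t, |quantFun ν₁ (cdfFun μ t) - quantFun ν₂ (cdfFun μ t)| ∂μ := by
    rw [intervalIntegral.integral_of_le zero_le_one]
    have hmono1 : ∫ t in Ioc (0:ℝ) 1, |quantFun ν₁ (cdfFun μ t) - quantFun ν₂ (cdfFun μ t)| ≤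
        ∫ t in Icc (0:ℝ) 1, |quantFun ν₁ (cdfFun μ t) - quantFun ν₂ (cdfFun μ t)| :=
      setIntegral_mono_set hgFIabs (ae_of_all _ fun t => abs_nonneg _)
        (HasSubset.Subset.eventuallyLE Ioc_subset_Icc_self)
    refine le_trans hmono1 ?_
    have hmono2 : ∫ t in Icc (0:ℝ) 1, |quantFun ν₁ (cdfFun μ t) - quantFun ν₂ (cdfFun μ t)| ≤
        ∫ t, |quantFun ν₁ (cdfFun μ t) - quantFun ν₂ (cdfFun μ t)|
          ∂((ENNReal.ofReal ε)⁻¹ • μ) :=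
      integral_mono_measure hle' (ae_of_all _ fun t => abs_nonneg _)
        ((hgFμ.abs).smul_measure hεinvtop)
    refine le_trans hmono2 (le_of_eq ?_)
    rw [integral_smul_measure, ENNReal.toReal_inv, ENNReal.toReal_ofReal hε.le,
      smul_eq_mul, one_div]
  refine le_trans step2 ?_
  have hasm_abs : AEStronglyMeasurable (fun u => |quantFun ν₁ u - quantFun ν₂ u|)
      (μ.map (cdfFun μ)) := by
    rw [hmapF]; exact hgabs_asm
  have step3 : ∫ t, |quantFun ν₁ (cdfFun μ t) - quantFun ν₂ (cdfFun μ t)| ∂μ =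
      ∫ u, |quantFun ν₁ u - quantFun ν₂ u| ∂P := by
    rw [← hmapF, integral_map hFmeas.aemeasurable hasm_abs]
  rw [step3]
  have step4 : Real.sqrt (∫ u, (quantFun ν₁ u - quantFun ν₂ u) ^ 2 ∂P) =
      Real.sqrt (∫ u in (0:ℝ)..1, (quantFun ν₁ u - quantFun ν₂ u) ^ 2) := by
    congr 1
    rw [intervalIntegral.integral_of_le zero_le_one]
    exact setIntegral_congr_set Ioo_ae_eq_Ioc
  refine le_trans (mul_le_mul_of_nonneg_left hCS (by positivity)) (le_of_eq ?_)
  rw [step4]
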